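/- Let X be a real Banach space such that X = c₀ ⊕_∞ Z (the ℓ∞-direct sum) for some closed subspace Z. Then there is a sequence (fₙ) in the unit sphere of X* such that for every x in the closed unit ball of X there are two sequences (yₙ), (zₙ) in the unit sphere of X which converge weakly to x and such that fₙ(yₙ − zₙ) = 2 for every n ∈ ℕ. -/

import Mathlib

noncomputable section
open NormedSpace ZeroAtInfty Filter Topology

namespace MyAux



/-- δ_k in C₀(ℕ,ℝ). -/
def delta (k : ℕ) : C₀(ℕ, ℝ) :=
  { toFun := Pi.single k 1
    continuous_toFun := continuous_of_discreteTopology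
    zero_at_infty' := by
      rw [cocompact_eq_cofinite, Nat.cofinite_eq_atTop]
      refine tendsto_const_nhds.congr' ?_
      filter_upwards [eventually_gt_atTop k] with j hj
      have : j ≠ k := fun h => by omega
      simp [Pi.single_apply, this] }

@[simp] lemma delta_apply (k j : ℕ) : delta k j = if j = k then 1 else 0 := by
  simp [delta, Pi.single_apply]

lemma norm_C0_le {f : C₀(ℕ, ℝ)} {c : ℝ} (hc : 0 ≤ c) (h : ∀ j, |f j| ≤ c) : ‖f‖ ≤ c := by
  rw [← ZeroAtInftyContinuousMap.norm_toBCF_eq_norm]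
  exact (BoundedContinuousFunction.norm_le hc).2 h

lemma abs_apply_le_norm (f : C₀(ℕ, ℝ)) (j : ℕ) : |f j| ≤ ‖f‖ := by
  rw [← ZeroAtInftyContinuousMap.norm_toBCF_eq_norm]
  exact BoundedContinuousFunction.norm_coe_le_norm f.toBCF j

@[simp] lemma norm_delta (k : ℕ) : ‖delta k‖ = 1 := by
  refine le_antisymm (norm_C0_le one_pos.le fun j => ?_) ?_
  · rcases eq_or_ne j k with h | h <;> simp [h]
  · have := abs_apply_le_norm (delta k) k
    simpa using this

lemma sum_delta_apply (s : Finset ℕ) (ε : ℕ → ℝ) (j : ℕ) :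
    (∑ k ∈ s, ε k • delta k) j = if j ∈ s then ε j else 0 := by
  induction s using Finset.induction_on with
  | empty => simp [ZeroAtInftyContinuousMap.coe_zero]
  | insert a s hk ih =>
    rw [Finset.sum_insert hk]
    simp only [ZeroAtInftyContinuousMap.coe_add, Pi.add_apply,
      ZeroAtInftyContinuousMap.coe_smul, Pi.smul_apply, delta_apply, ih]
    rcases eq_or_ne j a with h | h
    · subst h; simp [hk]
    · simp [h, Ne.symm h]

lemma norm_sum_delta_le (s : Finset ℕ) (ε : ℕ → ℝ) (hε : ∀ k, |ε k| ≤ 1) :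
    ‖∑ k ∈ s, ε k • delta k‖ ≤ 1 := by
  refine norm_C0_le one_pos.le fun j => ?_
  rw [sum_delta_apply]
  split
  · exact hε j
  · simp

/-- perturbing one coordinate to ±1 keeps norm 1 -/
lemma norm_perturb (u : C₀(ℕ, ℝ)) (hu : ‖u‖ ≤ 1) (k : ℕ) (t : ℝ) (ht : |u k + t| = 1) :
    ‖u + t • delta k‖ = 1 := by
  refine le_antisymm (norm_C0_le one_pos.le fun j => ?_) ?_
  · simp only [ZeroAtInftyContinuousMap.coe_add, Pi.add_apply,
      ZeroAtInftyContinuousMap.coe_smul, Pi.smul_apply, delta_apply]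
    rcases eq_or_ne j k with h | h
    · subst h; simpa using ht.le
    · simpa [h] using (abs_apply_le_norm u j).trans hu
  · have h1 := abs_apply_le_norm (u + t • delta k) k
    simp only [ZeroAtInftyContinuousMap.coe_add, Pi.add_apply,
      ZeroAtInftyContinuousMap.coe_smul, Pi.smul_apply, delta_apply] at h1
    rw [if_pos trivial, smul_eq_mul, mul_one] at h1
    rw [ht] at h1
    exact h1

lemma u_tendsto_zero (u : C₀(ℕ, ℝ)) : Tendsto (fun k => u k) atTop (𝓝 0) := by
  have := u.zero_at_infty'
  rwa [cocompact_eq_cofinite, Nat.cofinite_eq_atTop] at this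



lemma weak_null {X : Type*} [NormedAddCommGroup X] [NormedSpace ℝ X] (E : ℕ → X)
    (hE : ∀ s : Finset ℕ, ∀ ε : ℕ → ℝ, (∀ k, |ε k| ≤ 1) → ‖∑ k ∈ s, ε k • E k‖ ≤ 1)
    (g : X →L[ℝ] ℝ) : Tendsto (fun k => g (E k)) atTop (𝓝 0) := by
  set a := fun k => g (E k) with ha
  have hsum : Summable fun k => |a k| := by
    apply summable_of_sum_range_le (fun k => abs_nonneg _) (c := ‖g‖)
    intro n
    set ε := fun k => if 0 ≤ a k then (1:ℝ) else -1 with hεdef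
    have hε : ∀ k, |ε k| ≤ 1 := by intro k; dsimp [ε]; split <;> simp
    have key : ∑ k ∈ Finset.range n, |a k| = g (∑ k ∈ Finset.range n, ε k • E k) := by
      rw [map_sum]
      refine Finset.sum_congr rfl fun k _ => ?_
      rw [map_smul, smul_eq_mul]
      dsimp only [ε, a]
      split
      · rw [abs_of_nonneg ‹_›, one_mul]
      · rw [abs_of_neg (lt_of_not_ge ‹_›), neg_one_mul]
    rw [key]
    calc g (∑ k ∈ Finset.range n, ε k • E k) ≤ |g (∑ k ∈ Finset.range n, ε k • E k)| :=
          le_abs_self _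
      _ ≤ ‖g‖ * ‖∑ k ∈ Finset.range n, ε k • E k‖ := g.le_opNorm _
      _ ≤ ‖g‖ * 1 := by
          have := hE (Finset.range n) ε hε
          exact mul_le_mul_of_nonneg_left this (norm_nonneg g)
      _ = ‖g‖ := mul_one _
  exact squeeze_zero_norm (fun k => le_of_eq (Real.norm_eq_abs _)) hsum.tendsto_atTop_zero

end MyAux

open MyAux

theorem sequence_of_functionals_for_c0_infty_sum
    (X : Type*) [NormedAddCommGroup X] [NormedSpace ℝ X] [CompleteSpace X]
    (C Z : Submodule ℝ X) (hC : IsClosed (C : Set X)) (hZ : IsClosed (Z : Set X))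
    (hcompl : IsCompl C Z)
    (e : C₀(ℕ, ℝ) ≃ₗᵢ[ℝ] C)
    (hmax : ∀ c ∈ C, ∀ z ∈ Z, ‖c + z‖ = max ‖c‖ ‖z‖) :
    ∃ f : ℕ → StrongDual ℝ X, (∀ n, ‖f n‖ = 1) ∧
      ∀ x : X, ‖x‖ ≤ 1 →
        ∃ y z : ℕ → X, (∀ n, ‖y n‖ = 1) ∧ (∀ n, ‖z n‖ = 1) ∧
          (∀ g : StrongDual ℝ X, Tendsto (fun k => g (y k)) atTop (𝓝 (g x))) ∧
          (∀ g : StrongDual ℝ X, Tendsto (fun k => g (z k)) atTop (𝓝 (g x))) ∧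
          ∀ n : ℕ, f n (y n - z n) = 2 := by
  classical
  set P : X →ₗ[ℝ] C := C.linearProjOfIsCompl Z hcompl with hPdef
  have hPx_mem : ∀ x : X, x - (P x : X) ∈ Z := by
    intro x
    have h := Submodule.projection_add_projection_eq_self hcompl x
    have hx : x - (P x : X) = (Z.linearProjOfIsCompl C hcompl.symm x : X) :=
      sub_eq_of_eq_add' h.symm
    rw [hx]; exact SetLike.coe_mem _
  have hnorm_eq : ∀ x : X, ‖x‖ = max ‖(P x : X)‖ ‖x - (P x : X)‖ := by
    intro x
    conv_lhs => rw [show x = (P x : X) + (x - (P x : X)) by abel]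
    exact hmax _ (P x).2 _ (hPx_mem x)
  -- the basis vectors in X
  set En : ℕ → X := fun k => ((e (delta k) : C) : X) with hEn
  have hEn_norm : ∀ k, ‖En k‖ = 1 := by
    intro k
    have h2 : ‖En k‖ = ‖(e (delta k) : C)‖ := rfl
    rw [h2, e.norm_map, norm_delta]
  have hPEn : ∀ k, P (En k) = e (delta k) :=
    fun k => Submodule.linearProjOfIsCompl_apply_left hcompl (e (delta k))
  -- the functionals
  have hbound : ∀ n (x : X), ‖(e.symm (P x) : C₀(ℕ, ℝ)) n‖ ≤ 1 * ‖x‖ := by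
    intro n x
    rw [one_mul, Real.norm_eq_abs]
    calc |(e.symm (P x) : C₀(ℕ, ℝ)) n| ≤ ‖e.symm (P x)‖ := abs_apply_le_norm _ n
      _ = ‖P x‖ := e.symm.norm_map _
      _ = ‖(P x : X)‖ := rfl
      _ ≤ ‖x‖ := (hnorm_eq x) ▸ le_max_left _ _
  set F : ℕ → (X →ₗ[ℝ] ℝ) := fun n =>
    { toFun := fun x => (e.symm (P x) : C₀(ℕ, ℝ)) n
      map_add' := fun x y => by
        simp [map_add, ZeroAtInftyContinuousMap.coe_add]
      map_smul' := fun r x => by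
        simp [map_smul, ZeroAtInftyContinuousMap.coe_smul] } with hFdef
  set f : ℕ → StrongDual ℝ X := fun n => (F n).mkContinuous 1 (hbound n) with hfdef
  have hfapply : ∀ n (x : X), f n x = (e.symm (P x) : C₀(ℕ, ℝ)) n := fun n x => rfl
  have hfEn : ∀ n k, f n (En k) = delta k n := by
    intro n k
    rw [hfapply, hPEn, e.symm_apply_apply]
  refine ⟨f, fun n => ?_, ?_⟩
  · refine le_antisymm ((F n).mkContinuous_norm_le one_pos.le _) ?_
    have h1 : f n (En n) = 1 := by rw [hfEn]; simp
    have := (f n).unit_le_opNorm (En n) (hEn_norm n).le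
    rw [h1] at this
    simpa using this
  · intro x hx
    set u : C₀(ℕ, ℝ) := e.symm (P x) with hudef
    set w : X := x - (P x : X) with hwdef
    have heu : ((e u : C) : X) = (P x : X) := by rw [hudef, e.apply_symm_apply]
    have hu_norm : ‖u‖ ≤ 1 := by
      calc ‖u‖ = ‖P x‖ := e.symm.norm_map _
        _ = ‖(P x : X)‖ := rfl
        _ ≤ ‖x‖ := (hnorm_eq x) ▸ le_max_left _ _
        _ ≤ 1 := hx
    have hw_norm : ‖w‖ ≤ 1 :=
      le_trans ((hnorm_eq x) ▸ le_max_right ‖(P x : X)‖ ‖w‖) hx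
    have huk : ∀ k, |u k| ≤ 1 := fun k => (abs_apply_le_norm u k).trans hu_norm
    -- decomposition of perturbed vectors
    have hpert : ∀ (k : ℕ) (t : ℝ), x + t • En k = ((e (u + t • delta k) : C) : X) + w := by
      intro k t
      rw [map_add, map_smul, Submodule.coe_add, Submodule.coe_smul, heu]
      rw [hwdef]; abel
    have hpert_norm : ∀ (k : ℕ) (t : ℝ), |u k + t| = 1 → ‖x + t • En k‖ = 1 := by
      intro k t ht
      rw [hpert k t, hmax _ (SetLike.coe_mem _) _ (hPx_mem x)]
      have hnc : ‖((e (u + t • delta k) : C) : X)‖ = ‖u + t • delta k‖ := by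
        rw [show ‖((e (u + t • delta k) : C) : X)‖ = ‖(e (u + t • delta k) : C)‖ from rfl,
          e.norm_map]
      rw [hnc, norm_perturb u hu_norm k t ht]
      exact max_eq_left hw_norm
    -- weak nullity of En
    have hEnull : ∀ g : StrongDual ℝ X, Tendsto (fun k => g (En k)) atTop (𝓝 0) := by
      intro g
      refine weak_null En (fun s ε hε => ?_) g
      have hs : ∑ k ∈ s, ε k • En k = ((e (∑ k ∈ s, ε k • delta k) : C) : X) := by
        rw [map_sum]
        push_cast [map_smul]
        rfl
      rw [hs, show ‖((e (∑ k ∈ s, ε k • delta k) : C) : X)‖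
          = ‖(e (∑ k ∈ s, ε k • delta k) : C)‖ from rfl, e.norm_map]
      exact norm_sum_delta_le s ε hε
    -- the sequences
    refine ⟨fun k => x + (1 - u k) • En k, fun k => x + (-(1 + u k)) • En k,
      fun k => hpert_norm k _ (by ring_nf; simp),
      fun k => hpert_norm k _ (by ring_nf; simp), ?_, ?_, ?_⟩
    · intro g
      have h1 : Tendsto (fun k => g x + (1 - u k) * g (En k)) atTop
          (𝓝 (g x + (1 - 0) * 0)) :=
        tendsto_const_nhds.add ((tendsto_const_nhds.sub (u_tendsto_zero u)).mul (hEnull g))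
      simpa using h1
    · intro g
      have h1 : Tendsto (fun k => g x + (-(1 + u k)) * g (En k)) atTop
          (𝓝 (g x + (-(1 + 0)) * 0)) :=
        tendsto_const_nhds.add (((tendsto_const_nhds.add (u_tendsto_zero u)).neg).mul (hEnull g))
      simpa using h1
    · intro n
      have hsub : (x + (1 - u n) • En n) - (x + (-(1 + u n)) • En n) = (2 : ℝ) • En n := by
        module
      rw [hsub, map_smul, smul_eq_mul, hfEn]
      simp
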